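/- (Fixed point alternative) Let (E,d) be a complete generalized metric space and J : E → E a strict contraction with Lipschitz constant L < 1. Then for each x ∈ E, either d(Jⁿx, J^{n+1}x) = ∞ for all n ≥ 0, or there exists n₀ such that d(Jⁿx, J^{n+1}x) < ∞ for all n ≥ n₀, the sequence (Jⁿx) converges to a fixed point y* of J, y* is the unique fixed point of J in Y₀ = {y ∈ E : d(J^{n₀}x, y) < ∞}, and d(y, y*) ≤ (1/(1−L)) d(y, Jy) for all y ∈ Y₀. -/

import Mathlib

open scoped ENNReal NNReal

/-- The fixed point alternative for strict contractions on a complete generalized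
metric space. -/
theorem stmt2 {E : Type*} (d : E → E → ℝ≥0∞)
    (hd0 : ∀ x y, d x y = 0 ↔ x = y)
    (hdsymm : ∀ x y, d x y = d y x)
    (hdtri : ∀ x y z, d x z ≤ d x y + d y z)
    (hcomplete : ∀ u : ℕ → E,
      (∀ ε : ℝ≥0∞, 0 < ε → ∃ N, ∀ m ≥ N, ∀ n ≥ N, d (u m) (u n) < ε) →
      ∃ L, ∀ ε : ℝ≥0∞, 0 < ε → ∃ N, ∀ n ≥ N, d (u n) L < ε)
    (J : E → E) (L : ℝ≥0) (hL : L < 1)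
    (hJ : ∀ x y, d (J x) (J y) ≤ (L : ℝ≥0∞) * d x y) (x : E) :
    (∀ n : ℕ, d (J^[n] x) (J^[n+1] x) = ⊤) ∨
    (∃ n₀ : ℕ, (∀ n ≥ n₀, d (J^[n] x) (J^[n+1] x) < ⊤) ∧
      ∃ ystar : E, J ystar = ystar ∧
        (∀ ε : ℝ≥0∞, 0 < ε → ∃ N, ∀ n ≥ N, d (J^[n] x) ystar < ε) ∧
        (∀ y : E, J y = y → d (J^[n₀] x) y < ⊤ → y = ystar) ∧
        (∀ y : E, d (J^[n₀] x) y < ⊤ →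
          d y ystar ≤ ((1 - L : ℝ≥0) : ℝ≥0∞)⁻¹ * d y (J y))) := by
  by_cases hall : ∀ n : ℕ, d (J^[n] x) (J^[n+1] x) = ⊤
  · exact Or.inl hall
  right
  push_neg at hall
  obtain ⟨n₀, hn₀⟩ := hall
  refine ⟨n₀, ?_⟩
  set u : ℕ → E := fun n => J^[n] x with hu
  set a : ℝ≥0∞ := d (u n₀) (u (n₀+1)) with ha
  have ha_ne : a ≠ ⊤ := hn₀
  have hL1 : (L : ℝ≥0∞) < 1 := by exact_mod_cast hL
  have hLne : (L : ℝ≥0∞) ≠ ⊤ := ENNReal.coe_ne_top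
  -- the coercion identity
  have hcoe : ((1 - L : ℝ≥0) : ℝ≥0∞) = 1 - (L : ℝ≥0∞) := by
    rw [ENNReal.coe_sub, ENNReal.coe_one]
  have h1L_ne0 : ((1 - L : ℝ≥0) : ℝ≥0∞) ≠ 0 := by
    simp only [ne_eq, ENNReal.coe_eq_zero]
    exact (tsub_pos_of_lt hL).ne'
  have h1L_ne_top : ((1 - L : ℝ≥0) : ℝ≥0∞) ≠ ⊤ := ENNReal.coe_ne_top
  -- step bound
  have step : ∀ k : ℕ, d (u (n₀+k)) (u (n₀+k+1)) ≤ (L : ℝ≥0∞) ^ k * a := by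
    intro k
    induction k with
    | zero => simp [ha]
    | succ k ih =>
      have h1 : d (u (n₀+k+1)) (u (n₀+k+2)) ≤ (L : ℝ≥0∞) * d (u (n₀+k)) (u (n₀+k+1)) := by
        have := hJ (J^[n₀+k] x) (J^[n₀+k+1] x)
        simpa [hu, ← Function.iterate_succ_apply' J] using this
      calc d (u (n₀+(k+1))) (u (n₀+(k+1)+1)) = d (u (n₀+k+1)) (u (n₀+k+2)) := by ring_nf
        _ ≤ (L : ℝ≥0∞) * d (u (n₀+k)) (u (n₀+k+1)) := h1
        _ ≤ (L : ℝ≥0∞) * ((L : ℝ≥0∞) ^ k * a) := mul_le_mul_right ih _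
        _ = (L : ℝ≥0∞) ^ (k+1) * a := by ring
  -- geometric sum bound
  have geo : ∀ j : ℕ, (∑ i ∈ Finset.range j, (L : ℝ≥0∞) ^ i) ≤ ((1 - L : ℝ≥0) : ℝ≥0∞)⁻¹ := by
    intro j
    calc (∑ i ∈ Finset.range j, (L : ℝ≥0∞) ^ i) ≤ ∑' i : ℕ, (L : ℝ≥0∞) ^ i :=
          ENNReal.sum_le_tsum _
      _ = (1 - (L : ℝ≥0∞))⁻¹ := ENNReal.tsum_geometric _
      _ = ((1 - L : ℝ≥0) : ℝ≥0∞)⁻¹ := by rw [hcoe]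
  set C : ℝ≥0∞ := ((1 - L : ℝ≥0) : ℝ≥0∞)⁻¹ * a with hC
  have hC_ne : C ≠ ⊤ := by
    refine (ENNReal.mul_lt_top ?_ ?_).ne
    · exact (ENNReal.inv_lt_top).2 (pos_iff_ne_zero.2 h1L_ne0)
    · exact lt_top_iff_ne_top.2 ha_ne
  -- distance between iterates bound
  have dist_bound : ∀ k j : ℕ, d (u (n₀+k)) (u (n₀+k+j)) ≤ (L : ℝ≥0∞) ^ k * C := by
    intro k j
    have key : ∀ j : ℕ, d (u (n₀+k)) (u (n₀+k+j)) ≤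
        (∑ i ∈ Finset.range j, (L : ℝ≥0∞) ^ (k+i)) * a := by
      intro j
      induction j with
      | zero => simp [(hd0 _ _).2 rfl]
      | succ j ih =>
        calc d (u (n₀+k)) (u (n₀+k+(j+1)))
            ≤ d (u (n₀+k)) (u (n₀+k+j)) + d (u (n₀+k+j)) (u (n₀+k+j+1)) := by
              have := hdtri (u (n₀+k)) (u (n₀+k+j)) (u (n₀+k+(j+1)))
              simpa [← add_assoc] using this
          _ ≤ (∑ i ∈ Finset.range j, (L : ℝ≥0∞) ^ (k+i)) * a + (L : ℝ≥0∞) ^ (k+j) * a :=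
              add_le_add ih (by simpa [add_assoc] using step (k+j))
          _ = (∑ i ∈ Finset.range (j+1), (L : ℝ≥0∞) ^ (k+i)) * a := by
              rw [Finset.sum_range_succ, add_mul]
    calc d (u (n₀+k)) (u (n₀+k+j)) ≤ (∑ i ∈ Finset.range j, (L : ℝ≥0∞) ^ (k+i)) * a := key j
      _ = (L : ℝ≥0∞) ^ k * (∑ i ∈ Finset.range j, (L : ℝ≥0∞) ^ i) * a := by
          rw [Finset.mul_sum]; congr 1; refine Finset.sum_congr rfl fun i _ => ?_; rw [pow_add]
      _ ≤ (L : ℝ≥0∞) ^ k * ((1 - L : ℝ≥0) : ℝ≥0∞)⁻¹ * a := by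
          exact mul_le_mul_left (mul_le_mul_right (geo j) _) a
      _ = (L : ℝ≥0∞) ^ k * C := by rw [hC, mul_assoc]
  have dbound2 : ∀ m n : ℕ, n₀ ≤ m → m ≤ n → d (u m) (u n) ≤ (L : ℝ≥0∞) ^ (m - n₀) * C := by
    intro m n hm hmn
    obtain ⟨k, rfl⟩ := Nat.exists_eq_add_of_le hm
    obtain ⟨j, rfl⟩ := Nat.exists_eq_add_of_le hmn
    simpa [Nat.add_sub_cancel_left] using dist_bound k j
  -- vanishing of L^k * C
  have htend : Filter.Tendsto (fun k : ℕ => (L : ℝ≥0∞) ^ k * C) Filter.atTop (nhds 0) := by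
    have := ENNReal.Tendsto.mul_const (ENNReal.tendsto_pow_atTop_nhds_zero_of_lt_one hL1) (Or.inr hC_ne)
    simpa using this
  -- Cauchy
  have hcauchy : ∀ ε : ℝ≥0∞, 0 < ε → ∃ N, ∀ m ≥ N, ∀ n ≥ N, d (u m) (u n) < ε := by
    intro ε hε
    obtain ⟨K, hK⟩ := Filter.eventually_atTop.1 (htend.eventually_lt_const hε)
    refine ⟨n₀ + K, fun m hm n hn => ?_⟩
    rcases le_total m n with h | h
    · exact lt_of_le_of_lt (dbound2 m n (by omega) h) (hK (m - n₀) (by omega))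
    · rw [hdsymm]
      exact lt_of_le_of_lt (dbound2 n m (by omega) h) (hK (n - n₀) (by omega))
  obtain ⟨y, hy⟩ := hcomplete u hcauchy
  -- fixed point
  have hfix : J y = y := by
    have h0 : d y (J y) = 0 := by
      refine le_antisymm (ENNReal.le_of_forall_pos_le_add fun ε hε _ => ?_) zero_le
      rw [zero_add]
      obtain ⟨N, hN⟩ := hy ((ε : ℝ≥0∞) / 2) (ENNReal.div_pos (by exact_mod_cast hε.ne') ENNReal.ofNat_ne_top)
      have h1 : d y (u (N+1)) < (ε : ℝ≥0∞) / 2 := by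
        rw [hdsymm]; exact hN (N+1) (by omega)
      have h2 : d (u (N+1)) (J y) ≤ (L : ℝ≥0∞) * d (u N) y := by
        simp only [hu]
        rw [Function.iterate_succ_apply' J N]
        exact hJ _ _
      have h3 : d (u (N+1)) (J y) < (ε : ℝ≥0∞) / 2 := by
        refine lt_of_le_of_lt h2 (lt_of_le_of_lt ?_ (hN N le_rfl))
        calc (L : ℝ≥0∞) * d (u N) y ≤ 1 * d (u N) y := mul_le_mul_left hL1.le _
          _ = d (u N) y := one_mul _
      refine le_of_lt ?_
      calc d y (J y) ≤ d y (u (N+1)) + d (u (N+1)) (J y) := hdtri _ _ _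
        _ < (ε : ℝ≥0∞) / 2 + (ε : ℝ≥0∞) / 2 := ENNReal.add_lt_add h1 h3
        _ = (ε : ℝ≥0∞) := ENNReal.add_halves _
    exact ((hd0 y (J y)).1 h0).symm
  -- finiteness of d (u n₀) y
  have hfin : d (u n₀) y < ⊤ := by
    obtain ⟨N, hN⟩ := hy 1 one_pos
    calc d (u n₀) y ≤ d (u n₀) (u (max N n₀)) + d (u (max N n₀)) y := hdtri _ _ _
      _ < ⊤ := by
          refine ENNReal.add_lt_top.2 ⟨?_, lt_trans (hN _ (le_max_left _ _)) (by simp)⟩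
          refine lt_of_le_of_lt (dbound2 n₀ (max N n₀) le_rfl (le_max_right _ _)) ?_
          exact ENNReal.mul_lt_top (ENNReal.pow_lt_top (ENNReal.coe_lt_top))
            (lt_top_iff_ne_top.2 hC_ne)
  -- a small contraction lemma
  have contract_zero : ∀ b : ℝ≥0∞, b ≠ ⊤ → b ≤ (L : ℝ≥0∞) * b → b = 0 := by
    intro b hb hle
    by_contra hb0
    have : b * 1 ≤ b * (L : ℝ≥0∞) := by
      rw [mul_one, mul_comm]; exact hle
    have := (ENNReal.mul_le_mul_iff_right hb0 hb).1 this
    exact absurd (lt_of_lt_of_le hL1 this) (lt_irrefl _)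
  -- finiteness of d y ystar for y in Y₀
  have hfinY : ∀ y' : E, d (u n₀) y' < ⊤ → d y' y < ⊤ := by
    intro y' hy'
    calc d y' y ≤ d y' (u n₀) + d (u n₀) y := hdtri _ _ _
      _ < ⊤ := ENNReal.add_lt_top.2 ⟨by rw [hdsymm]; exact hy', hfin⟩
  refine ⟨?_, y, hfix, fun ε hε => ?_, ?_, ?_⟩
  · -- finiteness of consecutive distances
    intro n hn
    obtain ⟨k, rfl⟩ := Nat.exists_eq_add_of_le hn
    refine lt_of_le_of_lt (step k) ?_
    exact ENNReal.mul_lt_top (ENNReal.pow_lt_top ENNReal.coe_lt_top)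
      (lt_top_iff_ne_top.2 ha_ne)
  · exact hy ε hε
  · -- uniqueness
    intro y' hy'fix hy'fin
    have hb : d y' y ≤ (L : ℝ≥0∞) * d y' y := by
      calc d y' y = d (J y') (J y) := by rw [hy'fix, hfix]
        _ ≤ (L : ℝ≥0∞) * d y' y := hJ _ _
    have := contract_zero _ (hfinY y' hy'fin).ne hb
    exact (hd0 _ _).1 this
  · -- the estimate
    intro y' hy'fin
    have hfin' : d y' y ≠ ⊤ := (hfinY y' hy'fin).ne
    have main : d y' y ≤ d y' (J y') + (L : ℝ≥0∞) * d y' y := by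
      calc d y' y ≤ d y' (J y') + d (J y') y := hdtri _ _ _
        _ = d y' (J y') + d (J y') (J y) := by rw [hfix]
        _ ≤ d y' (J y') + (L : ℝ≥0∞) * d y' y := add_le_add_right (hJ _ _) _
    have hsub : ((1 - L : ℝ≥0) : ℝ≥0∞) * d y' y ≤ d y' (J y') := by
      rw [hcoe, ENNReal.sub_mul (fun _ _ => hfin'), one_mul]
      exact tsub_le_iff_right.2 main
    rw [← ENNReal.div_eq_inv_mul]
    exact (ENNReal.le_div_iff_mul_le (Or.inl h1L_ne0) (Or.inl h1L_ne_top)).2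
      (by rw [mul_comm]; exact hsub)
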